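/- arXiv:1302.0019 — 3 statements merged into one kernel-verified Lean document; each statement's English description precedes it below -/
import Mathlib

section
/- For q_0 = 5/6 and q_1 = 1/6: the complete tree with codewords {0, 1} achieves I-divergence per bit (−1 − (1/2)log₂(q_0 q_1))/1, while the non-complete tree with codewords {0, 10} achieves (−1 − (1/2)log₂(q_0² q_1))/(3/2), and the latter is strictly smaller than the former. -/
open Finset Real

/-- number of zeros in a binary string -/
def zeros (w : List Bool) : ℕ := w.count false
/-- number of ones in a binary string -/
def ones (w : List Bool) : ℕ := w.count true
/-- product weight of a binary string -/
noncomputable def Qw (q0 q1 : ℝ) (w : List Bool) : ℝ := q0 ^ zeros w * q1 ^ ones w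

/-- C is prefix-free -/
def PrefixFree (C : Finset (List Bool)) : Prop :=
  ∀ u ∈ C, ∀ v ∈ C, u <+: v → u = v

/-- C is a maximal prefix-free set: the leaves of a complete binary tree -/
def MaximalPrefixFree (C : Finset (List Bool)) : Prop :=
  PrefixFree C ∧
    ∀ s : ℕ → Bool, ∃ w ∈ C, ∀ i : Fin w.length, w.get i = s i.val

/-- informational divergence D(U‖Q) for the uniform distribution on C -/
noncomputable def Dkl (q0 q1 : ℝ) (C : Finset (List Bool)) : ℝ :=
  ∑ w ∈ C, ((C.card : ℝ))⁻¹ * Real.logb 2 (((C.card : ℝ))⁻¹ / Qw q0 q1 w)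

/-- expected codeword length under the uniform distribution on C -/
noncomputable def EL (C : Finset (List Bool)) : ℝ :=
  ∑ w ∈ C, ((C.card : ℝ))⁻¹ * (w.length : ℝ)

theorem stmt7 :
    (-1 - (1 / 2) * Real.logb 2 ((5 / 6 : ℝ) ^ 2 * (1 / 6))) / (3 / 2) <
      (-1 - (1 / 2) * Real.logb 2 ((5 / 6 : ℝ) * (1 / 6))) / 1 := by
  have h2 : (0:ℝ) < Real.log 2 := Real.log_pos (by norm_num)
  have ha : Real.log ((5/6:ℝ)^2*(1/6)) = 2*Real.log 5 - 3*Real.log 6 := by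
    rw [show ((5/6:ℝ)^2*(1/6)) = 5^2/6^3 by norm_num,
      Real.log_div (by norm_num) (by norm_num), Real.log_pow, Real.log_pow]
    push_cast; ring
  have hb : Real.log ((5/6:ℝ)*(1/6)) = Real.log 5 - 2*Real.log 6 := by
    rw [show ((5/6:ℝ)*(1/6)) = 5/6^2 by norm_num,
      Real.log_div (by norm_num) (by norm_num), Real.log_pow]
    push_cast; ring
  have hc : 2*Real.log 2 < Real.log 5 := by
    have h := Real.log_lt_log (by norm_num : (0:ℝ) < 4) (by norm_num : (4:ℝ) < 5)
    rw [show (4:ℝ) = 2^2 by norm_num, Real.log_pow] at h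
    push_cast at h; linarith
  rw [Real.logb, Real.logb, ha, hb, div_one,
    div_lt_iff₀ (by norm_num : (0:ℝ) < 3/2)]
  have ht : 2 < Real.log 5 / Real.log 2 := (lt_div_iff₀ h2).2 (by linarith)
  have e1 : (2*Real.log 5 - 3*Real.log 6) / Real.log 2
      = 2*(Real.log 5 / Real.log 2) - 3*(Real.log 6 / Real.log 2) := by ring
  have e2 : (Real.log 5 - 2*Real.log 6) / Real.log 2
      = Real.log 5 / Real.log 2 - 2*(Real.log 6 / Real.log 2) := by ring
  rw [e1, e2]
  linarith
end

section
/- Let 𝒯 be a nonempty finite set and F, G: 𝒯 → ℝ_{>0}. Define a sequence: pick T_0 minimizing F; given T_i, set Δ_i = F(T_i)/G(T_i) and choose T_{i+1} minimizing F(T) − Δ_i G(T) over 𝒯. Then either F(T_{i+1}) − Δ_i G(T_{i+1}) = 0, in which case Δ_i = min_T F(T)/G(T), or Δ_{i+1} < Δ_i strictly. Consequently the iteration reaches the minimum of F/G in finitely many steps. -/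
theorem stmt15 {α : Type*} (𝒯 : Finset α) (hne : 𝒯.Nonempty) (F G : α → ℝ)
    (hF : ∀ T ∈ 𝒯, 0 < F T) (hG : ∀ T ∈ 𝒯, 0 < G T)
    (T : ℕ → α) (hTmem : ∀ i, T i ∈ 𝒯)
    (h0 : ∀ S ∈ 𝒯, F (T 0) ≤ F S)
    (hstep : ∀ i, ∀ S ∈ 𝒯,
      F (T (i + 1)) - (F (T i) / G (T i)) * G (T (i + 1)) ≤
        F S - (F (T i) / G (T i)) * G S) :
    (∀ i, (F (T (i + 1)) - (F (T i) / G (T i)) * G (T (i + 1)) = 0 →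
            ∀ S ∈ 𝒯, F (T i) / G (T i) ≤ F S / G S) ∧
          (F (T (i + 1)) - (F (T i) / G (T i)) * G (T (i + 1)) ≠ 0 →
            F (T (i + 1)) / G (T (i + 1)) < F (T i) / G (T i))) ∧
    ∃ i, ∀ S ∈ 𝒯, F (T i) / G (T i) ≤ F S / G S := by
  have hGpos : ∀ i, 0 < G (T i) := fun i => hG _ (hTmem i)
  have hFpos : ∀ i, 0 < F (T i) := fun i => hF _ (hTmem i)
  have hcancel : ∀ i, F (T i) / G (T i) * G (T i) = F (T i) := fun i =>
    div_mul_cancel₀ _ (hGpos i).ne'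
  have hle : ∀ i, F (T (i + 1)) - (F (T i) / G (T i)) * G (T (i + 1)) ≤ 0 := by
    intro i
    have := hstep i (T i) (hTmem i)
    rw [hcancel i] at this
    linarith
  have key : ∀ i, (F (T (i + 1)) - (F (T i) / G (T i)) * G (T (i + 1)) = 0 →
            ∀ S ∈ 𝒯, F (T i) / G (T i) ≤ F S / G S) ∧
          (F (T (i + 1)) - (F (T i) / G (T i)) * G (T (i + 1)) ≠ 0 →
            F (T (i + 1)) / G (T (i + 1)) < F (T i) / G (T i)) := by
    intro i
    constructor
    · intro h S hS
      have := hstep i S hS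
      rw [h] at this
      rw [le_div_iff₀ (hG S hS)]
      linarith
    · intro h
      have hlt : F (T (i + 1)) - (F (T i) / G (T i)) * G (T (i + 1)) < 0 :=
        lt_of_le_of_ne (hle i) h
      rw [div_lt_iff₀ (hGpos (i + 1))]
      linarith
  refine ⟨key, ?_⟩
  by_contra hcon
  push_neg at hcon
  have hne0 : ∀ i, F (T (i + 1)) - (F (T i) / G (T i)) * G (T (i + 1)) ≠ 0 := by
    intro i h
    obtain ⟨S, hS, hlt⟩ := hcon i
    exact absurd ((key i).1 h S hS) (not_le.mpr hlt)
  have hanti : StrictAnti (fun i => F (T i) / G (T i)) :=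
    strictAnti_nat_of_succ_lt fun i => (key i).2 (hne0 i)
  have hinj : Function.Injective (fun i => F (T i) / G (T i)) := hanti.injective
  have hmem : ∀ i, F (T i) / G (T i) ∈ (↑(𝒯.image fun S => F S / G S) : Set ℝ) := by
    intro i
    simp only [Finset.coe_image, Set.mem_image, Finset.mem_coe]
    exact ⟨T i, hTmem i, rfl⟩
  exact (𝒯.image fun S => F S / G S).finite_toSet.not_infinite
    (Set.infinite_of_injective_forall_mem hinj hmem)
end

section
/- Let q_0, q_1 > 0 with max{q_0,q_1} ≤ 4·min{q_0,q_1} and q_0 + q_1 = 1, and let Δ_m be the minimum of D(U‖Q)/E_U[L] over complete binary trees with 2^m leaves. Then for every m ≥ 1, Δ_m ≤ −1 − (1/2)log₂(q_0 q_1), and consequently both q_0·2^{Δ_m} ≤ 1 and q_1·2^{Δ_m} ≤ 1. -/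
open Finset Real

/-- all binary words of length m -/
def allWords : ℕ → Finset (List Bool)
  | 0 => {[]}
  | m + 1 => (allWords m).image (List.cons false) ∪ (allWords m).image (List.cons true)

lemma mem_allWords : ∀ (m : ℕ) (w : List Bool), w ∈ allWords m ↔ w.length = m := by
  intro m
  induction m with
  | zero => intro w; simp [allWords, List.length_eq_zero_iff]
  | succ m ih =>
    intro w
    cases w with
    | nil => simp [allWords]
    | cons b t =>
      cases b <;> simp [allWords, ih]

lemma card_allWords : ∀ m : ℕ, (allWords m).card = 2 ^ m := by
  intro m
  induction m with
  | zero => simp [allWords]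
  | succ m ih =>
    rw [allWords, Finset.card_union_of_disjoint, Finset.card_image_of_injective _ (List.cons_injective),
      Finset.card_image_of_injective _ (List.cons_injective), ih]
    · ring
    · simp only [Finset.disjoint_left, Finset.mem_image]
      rintro w ⟨u, _, rfl⟩ ⟨v, _, h⟩
      simp at h

lemma zeros_sum : ∀ m : ℕ, 2 * (∑ w ∈ allWords m, zeros w) = m * 2 ^ m := by
  intro m
  induction m with
  | zero => simp [allWords, zeros]
  | succ m ih =>
    rw [allWords, Finset.sum_union, Finset.sum_image (fun a _ b _ h => List.cons_injective h),
      Finset.sum_image (fun a _ b _ h => List.cons_injective h)]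
    · have h1 : ∀ w : List Bool, zeros (false :: w) = zeros w + 1 := by
        intro w; simp [zeros]
      have h2 : ∀ w : List Bool, zeros (true :: w) = zeros w := by
        intro w; simp [zeros]
      simp only [h1, h2, Finset.sum_add_distrib, Finset.sum_const, card_allWords, smul_eq_mul,
        mul_one]
      rw [pow_succ]
      calc 2 * (∑ w ∈ allWords m, zeros w + 2 ^ m + ∑ w ∈ allWords m, zeros w)
          = 2 * (2 * ∑ w ∈ allWords m, zeros w) + 2 * 2 ^ m := by ring
        _ = 2 * (m * 2 ^ m) + 2 * 2 ^ m := by rw [ih]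
        _ = (m + 1) * (2 ^ m * 2) := by ring
    · simp only [Finset.disjoint_left, Finset.mem_image]
      rintro w ⟨u, _, rfl⟩ ⟨v, _, h⟩
      simp at h

lemma ones_sum : ∀ m : ℕ, 2 * (∑ w ∈ allWords m, ones w) = m * 2 ^ m := by
  intro m
  induction m with
  | zero => simp [allWords, ones]
  | succ m ih =>
    rw [allWords, Finset.sum_union, Finset.sum_image (fun a _ b _ h => List.cons_injective h),
      Finset.sum_image (fun a _ b _ h => List.cons_injective h)]
    · have h1 : ∀ w : List Bool, ones (false :: w) = ones w := by
        intro w; simp [ones]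
      have h2 : ∀ w : List Bool, ones (true :: w) = ones w + 1 := by
        intro w; simp [ones]
      simp only [h1, h2, Finset.sum_add_distrib, Finset.sum_const, card_allWords, smul_eq_mul,
        mul_one]
      rw [pow_succ]
      calc 2 * (∑ w ∈ allWords m, ones w + (∑ w ∈ allWords m, ones w + 2 ^ m))
          = 2 * (2 * ∑ w ∈ allWords m, ones w) + 2 * 2 ^ m := by ring
        _ = 2 * (m * 2 ^ m) + 2 * 2 ^ m := by rw [ih]
        _ = (m + 1) * (2 ^ m * 2) := by ring
    · simp only [Finset.disjoint_left, Finset.mem_image]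
      rintro w ⟨u, _, rfl⟩ ⟨v, _, h⟩
      simp at h

lemma maximalPrefixFree_allWords (m : ℕ) : MaximalPrefixFree (allWords m) := by
  constructor
  · intro u hu v hv huv
    exact huv.eq_of_length (by rw [(mem_allWords m u).1 hu, (mem_allWords m v).1 hv])
  · intro s
    refine ⟨List.ofFn (fun i : Fin m => s i.val), (mem_allWords m _).2 (by simp), ?_⟩
    intro i
    rw [List.get_ofFn]
    simp

lemma ratio_allWords (q0 q1 : ℝ) (hq0 : 0 < q0) (hq1 : 0 < q1) (m : ℕ) (hm : 1 ≤ m) :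
    Dkl q0 q1 (allWords m) / EL (allWords m) = -1 - (1 / 2) * Real.logb 2 (q0 * q1) := by
  have hcard : ((allWords m).card : ℝ) = 2 ^ m := by rw [card_allWords]; push_cast; ring
  have hpow : (0:ℝ) < 2 ^ m := by positivity
  have hEL : EL (allWords m) = m := by
    unfold EL
    have : ∀ w ∈ allWords m, ((allWords m).card : ℝ)⁻¹ * (w.length : ℝ)
        = ((2:ℝ) ^ m)⁻¹ * m := by
      intro w hw
      rw [hcard, (mem_allWords m w).1 hw]
    rw [Finset.sum_congr rfl this, Finset.sum_const, card_allWords]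
    push_cast
    rw [nsmul_eq_mul]; push_cast
    field_simp
  have hDkl : Dkl q0 q1 (allWords m) =
      -(m : ℝ) - ((m : ℝ) / 2) * (Real.logb 2 q0 + Real.logb 2 q1) := by
    unfold Dkl
    have hterm : ∀ w ∈ allWords m, ((allWords m).card : ℝ)⁻¹ *
        Real.logb 2 (((allWords m).card : ℝ)⁻¹ / Qw q0 q1 w)
        = ((2:ℝ) ^ m)⁻¹ * (-(m : ℝ) - ((zeros w : ℝ) * Real.logb 2 q0 + (ones w : ℝ) * Real.logb 2 q1)) := by
      intro w _
      rw [hcard]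
      congr 1
      rw [Real.logb_div (by positivity) (by unfold Qw; positivity), Real.logb_inv]
      unfold Qw
      rw [Real.logb_mul (by positivity) (by positivity), Real.logb_pow, Real.logb_pow,
        Real.logb_pow]
      simp [Real.logb_self_eq_one]
    rw [Finset.sum_congr rfl hterm, ← Finset.mul_sum]
    have hz : (∑ w ∈ allWords m, (zeros w : ℝ)) = (m : ℝ) * 2 ^ m / 2 := by
      have := zeros_sum m
      have h2 : (2:ℝ) * (∑ w ∈ allWords m, (zeros w : ℝ)) = (m:ℝ) * 2 ^ m := by
        exact_mod_cast this
      linarith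
    have ho : (∑ w ∈ allWords m, (ones w : ℝ)) = (m : ℝ) * 2 ^ m / 2 := by
      have := ones_sum m
      have h2 : (2:ℝ) * (∑ w ∈ allWords m, (ones w : ℝ)) = (m:ℝ) * 2 ^ m := by
        exact_mod_cast this
      linarith
    rw [Finset.sum_sub_distrib, Finset.sum_add_distrib, ← Finset.sum_mul, ← Finset.sum_mul,
      hz, ho, Finset.sum_const, card_allWords]
    push_cast
    field_simp
    ring
  rw [hEL, hDkl]
  have hm' : (m : ℝ) ≠ 0 := by positivity
  rw [← Real.logb_mul (ne_of_gt hq0) (ne_of_gt hq1)] at *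
  field_simp

lemma key_rpow (q0 q1 : ℝ) (hq0 : 0 < q0) (hq1 : 0 < q1) (h04 : q0 ≤ 4 * q1) :
    q0 * (2 : ℝ) ^ (-1 - (1 / 2) * Real.logb 2 (q0 * q1)) ≤ 1 := by
  have hq01 : (0:ℝ) < q0 * q1 := by positivity
  have hK : (2:ℝ) ^ (Real.logb 2 (q0 * q1)) = q0 * q1 :=
    Real.rpow_logb two_pos (by norm_num) hq01
  have h2 : (2:ℝ) ^ (-1 - (1 / 2) * Real.logb 2 (q0 * q1))
      = 2⁻¹ * (Real.sqrt (q0 * q1))⁻¹ := by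
    rw [sub_eq_add_neg, Real.rpow_add two_pos, Real.rpow_neg_one,
      Real.rpow_neg (by norm_num : (0:ℝ) ≤ 2), mul_comm (1/2 : ℝ), Real.rpow_mul (by norm_num),
      hK, ← Real.sqrt_eq_rpow]
  rw [h2]
  have hsq : (0:ℝ) < Real.sqrt (q0 * q1) := Real.sqrt_pos.2 hq01
  have hle : q0 ≤ 2 * Real.sqrt (q0 * q1) := by
    have h4 : (2:ℝ) * Real.sqrt (q0 * q1) = Real.sqrt (4 * (q0 * q1)) := by
      rw [Real.sqrt_mul (by norm_num : (0:ℝ) ≤ 4),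
        show Real.sqrt 4 = 2 by rw [show (4:ℝ) = 2 ^ 2 by norm_num, Real.sqrt_sq (by norm_num)]]
    rw [h4]
    refine (Real.le_sqrt hq0.le (by positivity)).2 ?_
    nlinarith
  calc q0 * (2⁻¹ * (Real.sqrt (q0 * q1))⁻¹) = q0 / (2 * Real.sqrt (q0 * q1)) := by ring
    _ ≤ 1 := (div_le_one (by positivity)).2 hle

theorem stmt18 (q0 q1 : ℝ) (hq0 : 0 < q0) (hq1 : 0 < q1) (hs : q0 + q1 = 1)
    (hcond : max q0 q1 ≤ 4 * min q0 q1) (Δ : ℕ → ℝ)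
    (hΔ : ∀ m, 1 ≤ m → IsLeast {x : ℝ | ∃ C : Finset (List Bool),
        MaximalPrefixFree C ∧ C.card = 2 ^ m ∧ x = Dkl q0 q1 C / EL C} (Δ m)) :
    ∀ m, 1 ≤ m → Δ m ≤ -1 - (1 / 2) * Real.logb 2 (q0 * q1) ∧
      q0 * (2 : ℝ) ^ (Δ m) ≤ 1 ∧ q1 * (2 : ℝ) ^ (Δ m) ≤ 1 := by
  intro m hm
  have hmem : (-1 - (1 / 2) * Real.logb 2 (q0 * q1)) ∈ {x : ℝ | ∃ C : Finset (List Bool),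
      MaximalPrefixFree C ∧ C.card = 2 ^ m ∧ x = Dkl q0 q1 C / EL C} :=
    ⟨allWords m, maximalPrefixFree_allWords m, card_allWords m,
      (ratio_allWords q0 q1 hq0 hq1 m hm).symm⟩
  have hle : Δ m ≤ -1 - (1 / 2) * Real.logb 2 (q0 * q1) := (hΔ m hm).2 hmem
  have h01 : q0 ≤ 4 * q1 := by
    have h1 := le_max_left q0 q1
    have h2 := min_le_right q0 q1
    linarith
  have h10 : q1 ≤ 4 * q0 := by
    have h1 := le_max_right q0 q1
    have h2 := min_le_left q0 q1
    linarith
  have hpowle : (2:ℝ) ^ (Δ m) ≤ (2:ℝ) ^ (-1 - (1 / 2) * Real.logb 2 (q0 * q1)) :=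
    Real.rpow_le_rpow_of_exponent_le (by norm_num) hle
  refine ⟨hle, ?_, ?_⟩
  · calc q0 * (2:ℝ) ^ (Δ m) ≤ q0 * (2:ℝ) ^ (-1 - (1 / 2) * Real.logb 2 (q0 * q1)) :=
        mul_le_mul_of_nonneg_left hpowle hq0.le
      _ ≤ 1 := key_rpow q0 q1 hq0 hq1 h01
  · calc q1 * (2:ℝ) ^ (Δ m) ≤ q1 * (2:ℝ) ^ (-1 - (1 / 2) * Real.logb 2 (q0 * q1)) :=
        mul_le_mul_of_nonneg_left hpowle hq1.le
      _ ≤ 1 := by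
        have := key_rpow q1 q0 hq1 hq0 h10
        rwa [mul_comm q1 q0] at this
end
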